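/- Let dc : 𝔤 → V* be a linear map satisfying dc([ξ,η]) = ξ·dc(η) − η·dc(ξ) for all ξ,η ∈ 𝔤. Let ξ(t) ∈ 𝔤, b(t) ∈ V be continuous curves and a(t) ∈ V*, v(t) ∈ V, m(t) ∈ 𝔤* differentiable curves on an interval, satisfying the advection equation a′ = −ξa − dc(ξ) and the equation v′ = b − ξv. Then m satisfies the affine Euler–Poincaré equation m′ = ad*_ξ m + b⋄a − dc^T(b) on the interval if and only if the shifted momentum m̃ := m − v⋄a + dc^T(v) satisfies m̃′ = ad*_ξ m̃ on the interval. -/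

import Mathlib

set_option maxHeartbeats 1000000
set_option linter.unusedSectionVars false


/- Setup: 𝔤 and V are finite-dimensional real (normed) vector spaces; the Lie
bracket of 𝔤 is given by the bilinear map `br` (antisymmetric, Jacobi) and the
representation of 𝔤 on V by `ρ`. The duals are realized as the continuous
duals `g →L[ℝ] ℝ`, `V →L[ℝ] ℝ` (in finite dimensions every linear functional
is continuous). The dual action is `⟨ξa, v⟩ = −⟨a, ξv⟩`, the diamond operation
`⟨v⋄a, ξ⟩ = −⟨ξa, v⟩`, the coadjoint operator `⟨ad*_ξ μ, η⟩ = ⟨μ, [ξ,η]⟩`, and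
`⟨dc^T(v), ξ⟩ = ⟨dc(ξ), v⟩`. -/

variable {g V : Type*}
  [NormedAddCommGroup g] [NormedSpace ℝ g] [FiniteDimensional ℝ g]
  [NormedAddCommGroup V] [NormedSpace ℝ V] [FiniteDimensional ℝ V]

/-- The induced action of `𝔤` on the dual `V*`: `⟨ξa, v⟩ = −⟨a, ξv⟩`. -/
def dAct (ρ : g →ₗ[ℝ] V →L[ℝ] V) (ξ : g) (a : V →L[ℝ] ℝ) : V →L[ℝ] ℝ :=
  -(a.comp (ρ ξ))

/-- The diamond operation `⟨v⋄a, ξ⟩ = −⟨ξa, v⟩ = ⟨a, ξv⟩`. -/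
noncomputable def diamond (ρ : g →ₗ[ℝ] V →L[ℝ] V) (v : V) (a : V →L[ℝ] ℝ) :
    g →L[ℝ] ℝ :=
  LinearMap.toContinuousLinearMap
    { toFun := fun ξ => a (ρ ξ v)
      map_add' := by intro x y; simp
      map_smul' := by intro c x; simp }

/-- The coadjoint operator `⟨ad*_ξ μ, η⟩ = ⟨μ, [ξ,η]⟩`. -/
noncomputable def coad (br : g →ₗ[ℝ] g →ₗ[ℝ] g) (ξ : g) (μ : g →L[ℝ] ℝ) :
    g →L[ℝ] ℝ :=
  μ.comp (LinearMap.toContinuousLinearMap (br ξ))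

/-- The transpose `⟨dc^T(v), ξ⟩ = ⟨dc(ξ), v⟩`. -/
noncomputable def dcT (dc : g →ₗ[ℝ] (V →L[ℝ] ℝ)) (v : V) : g →L[ℝ] ℝ :=
  LinearMap.toContinuousLinearMap
    { toFun := fun ξ => dc ξ v
      map_add' := by intro x y; simp
      map_smul' := by intro c x; simp }

lemma diamond_apply (ρ : g →ₗ[ℝ] V →L[ℝ] V) (v : V) (a : V →L[ℝ] ℝ) (ξ : g) :
    diamond ρ v a ξ = a (ρ ξ v) := rfl

lemma dcT_apply (dc : g →ₗ[ℝ] (V →L[ℝ] ℝ)) (v : V) (ξ : g) :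
    dcT dc v ξ = dc ξ v := rfl

lemma coad_apply (br : g →ₗ[ℝ] g →ₗ[ℝ] g) (ξ : g) (μ : g →L[ℝ] ℝ) (η : g) :
    coad br ξ μ η = μ (br ξ η) := rfl

/-- diamond as a continuous bilinear map. -/
noncomputable def diaB (ρ : g →ₗ[ℝ] V →L[ℝ] V) :
    V →L[ℝ] (V →L[ℝ] ℝ) →L[ℝ] (g →L[ℝ] ℝ) :=
  LinearMap.toContinuousLinearMap
    { toFun := fun v => LinearMap.toContinuousLinearMap
        { toFun := fun a => diamond ρ v a
          map_add' := by intro x y; ext η; simp [diamond_apply]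
          map_smul' := by intro c x; ext η; simp [diamond_apply] }
      map_add' := by intro x y; ext a η; simp [diamond_apply]
      map_smul' := by intro c x; ext a η; simp [diamond_apply] }

lemma diaB_apply (ρ : g →ₗ[ℝ] V →L[ℝ] V) (v : V) (a : V →L[ℝ] ℝ) :
    diaB ρ v a = diamond ρ v a := rfl

/-- dcT as a continuous linear map. -/
noncomputable def dcTL (dc : g →ₗ[ℝ] (V →L[ℝ] ℝ)) : V →L[ℝ] (g →L[ℝ] ℝ) :=
  LinearMap.toContinuousLinearMap
    { toFun := fun v => dcT dc v
      map_add' := by intro x y; ext η; simp [dcT_apply]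
      map_smul' := by intro c x; ext η; simp [dcT_apply] }

lemma dcTL_apply (dc : g →ₗ[ℝ] (V →L[ℝ] ℝ)) (v : V) : dcTL dc v = dcT dc v := rfl

lemma clm_comp_hasDerivAt {E F : Type*} [NormedAddCommGroup E] [NormedSpace ℝ E]
    [NormedAddCommGroup F] [NormedSpace ℝ F] (L : E →L[ℝ] F) {u : ℝ → E} {w : E} {t : ℝ}
    (h : HasDerivAt u w t) : HasDerivAt (⇑L ∘ u) (L w) t :=
  L.hasFDerivAt.comp_hasDerivAt t h

/-- Given the advection equation `a′ = −ξa − dc(ξ)` and the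
equation `v′ = b − ξv`, the curve `m` satisfies the affine Euler–Poincaré
equation `m′ = ad*_ξ m + b⋄a − dc^T(b)` iff the shifted momentum
`m̃ := m − v⋄a + dc^T(v)` satisfies `m̃′ = ad*_ξ m̃`. -/
theorem affine_EP_shifted_momentum
    (br : g →ₗ[ℝ] g →ₗ[ℝ] g)
    (hbr : ∀ x : g, br x x = 0)
    (hjac : ∀ x y z : g, br x (br y z) + br y (br z x) + br z (br x y) = 0)
    (ρ : g →ₗ[ℝ] V →L[ℝ] V)
    (hρ : ∀ x y : g, ρ (br x y) = (ρ x).comp (ρ y) - (ρ y).comp (ρ x))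
    (dc : g →ₗ[ℝ] (V →L[ℝ] ℝ))
    (hdc : ∀ x y : g, dc (br x y) = dAct ρ x (dc y) - dAct ρ y (dc x))
    (t₀ t₁ : ℝ)
    (ξ : ℝ → g) (b : ℝ → V)
    (hξ : ContinuousOn ξ (Set.Icc t₀ t₁)) (hb : ContinuousOn b (Set.Icc t₀ t₁))
    (a : ℝ → (V →L[ℝ] ℝ)) (v : ℝ → V) (m : ℝ → (g →L[ℝ] ℝ))
    (ha : ∀ t ∈ Set.Icc t₀ t₁,
      HasDerivAt a (-(dAct ρ (ξ t) (a t)) - dc (ξ t)) t)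
    (hv : ∀ t ∈ Set.Icc t₀ t₁,
      HasDerivAt v (b t - ρ (ξ t) (v t)) t)
    (hm : ∀ t ∈ Set.Icc t₀ t₁, DifferentiableAt ℝ m t) :
    (∀ t ∈ Set.Icc t₀ t₁,
        HasDerivAt m
          (coad br (ξ t) (m t) + diamond ρ (b t) (a t) - dcT dc (b t)) t) ↔
      (∀ t ∈ Set.Icc t₀ t₁,
        HasDerivAt (fun s => m s - diamond ρ (v s) (a s) + dcT dc (v s))
          (coad br (ξ t) (m t - diamond ρ (v t) (a t) + dcT dc (v t))) t) := by
  -- derivative of the shift n(s) = v⋄a - dcT v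
  have key : ∀ t ∈ Set.Icc t₀ t₁,
      HasDerivAt (fun s => diamond ρ (v s) (a s) - dcT dc (v s))
        (coad br (ξ t) (diamond ρ (v t) (a t) - dcT dc (v t))
          + diamond ρ (b t) (a t) - dcT dc (b t)) t := by
    intro t ht
    have hd1 : HasDerivAt (⇑(diaB ρ) ∘ v)
        (diaB ρ (b t - ρ (ξ t) (v t))) t :=
      by
        exact clm_comp_hasDerivAt (F := (V →L[ℝ] ℝ) →L[ℝ] (g →L[ℝ] ℝ)) (diaB ρ) (hv t ht)
    have hd2 : HasDerivAt (fun s => diaB ρ (v s) (a s))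
        (diaB ρ (b t - ρ (ξ t) (v t)) (a t)
          + diaB ρ (v t) (-(dAct ρ (ξ t) (a t)) - dc (ξ t))) t :=
      hd1.clm_apply (ha t ht)
    have hd3 : HasDerivAt (⇑(dcTL dc) ∘ v)
        (dcTL dc (b t - ρ (ξ t) (v t))) t :=
      by exact (ContinuousLinearMap.hasFDerivAt (𝕜 := ℝ) (E := V)
        (F := g →L[ℝ] ℝ) (dcTL dc)).comp_hasDerivAt t (hv t ht)
    have hd4 := hd2.sub hd3
    have hEq : diaB ρ (b t - ρ (ξ t) (v t)) (a t)
          + diaB ρ (v t) (-(dAct ρ (ξ t) (a t)) - dc (ξ t))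
          - dcTL dc (b t - ρ (ξ t) (v t))
        = coad br (ξ t) (diamond ρ (v t) (a t) - dcT dc (v t))
          + diamond ρ (b t) (a t) - dcT dc (b t) := by
      ext η
      simp [diaB_apply, dcTL_apply, diamond_apply, dcT_apply, coad_apply,
        dAct, hρ, hdc]
      ring
    rw [hEq] at hd4
    exact hd4
  have coad_sub : ∀ (ζ : g) (μ ν : g →L[ℝ] ℝ),
      coad br ζ (μ - ν) = coad br ζ μ - coad br ζ ν := by
    intro ζ μ ν; ext η; simp [coad_apply]
  constructor
  · intro hEP t ht
    have h := (hEP t ht).sub (key t ht)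
    have hfun : (fun s => m s - diamond ρ (v s) (a s) + dcT dc (v s))
        = fun s => m s - (diamond ρ (v s) (a s) - dcT dc (v s)) := by
      funext s; abel
    rw [hfun]
    have hder : coad br (ξ t) (m t - diamond ρ (v t) (a t) + dcT dc (v t))
        = (coad br (ξ t) (m t) + diamond ρ (b t) (a t) - dcT dc (b t))
          - (coad br (ξ t) (diamond ρ (v t) (a t) - dcT dc (v t))
            + diamond ρ (b t) (a t) - dcT dc (b t)) := by
      have : m t - diamond ρ (v t) (a t) + dcT dc (v t)
          = m t - (diamond ρ (v t) (a t) - dcT dc (v t)) := by abel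
      rw [this, coad_sub]; abel
    rw [hder]
    exact h
  · intro hS t ht
    have h := (hS t ht).add (key t ht)
    have hfun : (fun s => (m s - diamond ρ (v s) (a s) + dcT dc (v s))
          + (diamond ρ (v s) (a s) - dcT dc (v s))) = m := by
      funext s; abel
    rw [show ((fun s => m s - diamond ρ (v s) (a s) + dcT dc (v s)) + fun s => diamond ρ (v s) (a s) - dcT dc (v s)) = m from hfun] at h
    have hder : coad br (ξ t) (m t - diamond ρ (v t) (a t) + dcT dc (v t))
          + (coad br (ξ t) (diamond ρ (v t) (a t) - dcT dc (v t))
            + diamond ρ (b t) (a t) - dcT dc (b t))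
        = coad br (ξ t) (m t) + diamond ρ (b t) (a t) - dcT dc (b t) := by
      have : m t - diamond ρ (v t) (a t) + dcT dc (v t)
          = m t - (diamond ρ (v t) (a t) - dcT dc (v t)) := by abel
      rw [this, coad_sub]; abel
    rw [hder] at h
    exact h
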